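/- arXiv:2209.14278 — 4 statements merged into one kernel-verified Lean document; each statement's English description precedes it below -/
import Mathlib

section
/- Let U be an N×N unitary matrix and χ ∈ ℂ^N a unit vector with Uχ = e^{iτ}χ for some τ ∈ ℝ. Then there exist ω ∈ ℝ and θ, φ ∈ ℝ² such that the single-layer QPP circuit satisfies tr[(Z ⊗ I_N) · V^1_{ω,θ,φ}(U)(e_0 e_0† ⊗ χχ†) V^1_{ω,θ,φ}(U)†] = cos(τ) = Re⟨χ, Uχ⟩; and there exist (possibly different) ω' ∈ ℝ and θ', φ' ∈ ℝ² such that tr[(Z ⊗ I_N) · V^1_{ω',θ',φ'}(U)(e_0 e_0† ⊗ χχ†) V^1_{ω',θ',φ'}(U)†] = sin(τ) = Im⟨χ, Uχ⟩. -/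
open scoped Matrix

/-- `R_z(φ) = diag(e^{-iφ/2}, e^{iφ/2})`. -/
noncomputable def Rz (φ : ℝ) : Matrix (Fin 2) (Fin 2) ℂ :=
  !![Complex.exp (-(Complex.I * φ / 2)), 0; 0, Complex.exp (Complex.I * φ / 2)]

/-- `R_y(θ)`, the real rotation by angle `θ/2`, viewed as a complex matrix. -/
noncomputable def Ry (θ : ℝ) : Matrix (Fin 2) (Fin 2) ℂ :=
  !![(Real.cos (θ / 2) : ℂ), -(Real.sin (θ / 2) : ℂ);
     (Real.sin (θ / 2) : ℂ), (Real.cos (θ / 2) : ℂ)]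

/-- The trigonometric QSP unitary
`W^L_{ω,θ,φ}(x) = R_z(ω) R_y(θ_0) R_z(φ_0) ∏_{l=1}^{L} [R_z(x) R_y(θ_l) R_z(φ_l)]`,
multiplied left to right in increasing `l`. -/
noncomputable def Wqsp (L : ℕ) (ω : ℝ) (θ φ : ℕ → ℝ) (x : ℝ) :
    Matrix (Fin 2) (Fin 2) ℂ :=
  Rz ω * Ry (θ 0) * Rz (φ 0) *
    ((List.range L).map (fun l => Rz x * Ry (θ (l + 1)) * Rz (φ (l + 1)))).prod

open scoped Kronecker

/-- Block-diagonal matrix `B(X,Y)` with upper-left block `X` and lower-right block `Y`,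
as a matrix on `ℂ² ⊗ ℂⁿ`. -/
noncomputable def blockDiag2 {n : Type*} [Fintype n] [DecidableEq n]
    (X Y : Matrix n n ℂ) : Matrix (Fin 2 × n) (Fin 2 × n) ℂ :=
  (!![1, 0; 0, 0] : Matrix (Fin 2) (Fin 2) ℂ) ⊗ₖ X +
    (!![0, 0; 0, 1] : Matrix (Fin 2) (Fin 2) ℂ) ⊗ₖ Y

/-- The QPP circuit for an even number `2·halfL` of layers. -/
noncomputable def qppEven {n : Type*} [Fintype n] [DecidableEq n]
    (U : Matrix n n ℂ) (halfL : ℕ) (ω : ℝ) (θ φ : ℕ → ℝ) :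
    Matrix (Fin 2 × n) (Fin 2 × n) ℂ :=
  ((Rz ω * Ry (θ 0) * Rz (φ 0)) ⊗ₖ (1 : Matrix n n ℂ)) *
    ((List.range halfL).map (fun l =>
      blockDiag2 Uᴴ 1 *
        ((Ry (θ (2 * l + 1)) * Rz (φ (2 * l + 1))) ⊗ₖ (1 : Matrix n n ℂ)) *
        blockDiag2 1 U *
        ((Ry (θ (2 * l + 2)) * Rz (φ (2 * l + 2))) ⊗ₖ (1 : Matrix n n ℂ)))).prod

/-- The quantum phase processing (QPP) circuit `V^L_{ω,θ,φ}(U)`: for even `L` it is the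
interleaved product of ancilla rotations and controlled-`U†`, controlled-`U`; for odd `L`
one extra layer `B(U†, I)·(R_y(θ_L) R_z(φ_L) ⊗ I)` is appended. -/
noncomputable def qpp {n : Type*} [Fintype n] [DecidableEq n]
    (U : Matrix n n ℂ) (L : ℕ) (ω : ℝ) (θ φ : ℕ → ℝ) :
    Matrix (Fin 2 × n) (Fin 2 × n) ℂ :=
  if L % 2 = 0 then qppEven U (L / 2) ω θ φ
  else qppEven U (L / 2) ω θ φ * blockDiag2 Uᴴ 1 *
    ((Ry (θ L) * Rz (φ L)) ⊗ₖ (1 : Matrix n n ℂ))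

namespace QppAux

set_option maxHeartbeats 1000000
set_option linter.unusedSectionVars false
set_option linter.unusedTactic false

lemma ct_fin_two (a b c d : ℂ) : (!![a,b;c,d])ᴴ = !![star a, star c; star b, star d] := by
  ext i j; fin_cases i <;> fin_cases j <;> simp

lemma Rz_zero : Rz 0 = 1 := by
  ext i j; fin_cases i <;> fin_cases j <;> simp [Rz]

lemma Ry_pos : Ry (Real.pi/2) = ((Real.sqrt 2/2 : ℝ) : ℂ) • !![1,-1;1,1] := by
  ext i j
  fin_cases i <;> fin_cases j <;>
    simp [Ry, show (Real.pi/2)/2 = Real.pi/4 by ring, Real.cos_pi_div_four,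
      Real.sin_pi_div_four]

lemma Ry_neg : Ry (-(Real.pi/2)) = ((Real.sqrt 2/2 : ℝ) : ℂ) • !![1,1;-1,1] := by
  ext i j
  fin_cases i <;> fin_cases j <;>
    simp [Ry, show (-(Real.pi/2))/2 = -(Real.pi/4) by ring, Real.cos_pi_div_four,
      Real.sin_pi_div_four]

lemma two_calc (τ φ0 : ℝ) :
    Matrix.trace ((!![1,0;0,-1] : Matrix (Fin 2) (Fin 2) ℂ) *
      ((Rz 0 * Ry (-(Real.pi/2)) * Rz φ0) *
       !![Complex.exp (-(Complex.I*τ)),0;0,1] *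
       (Ry (Real.pi/2) * Rz 0) *
       !![1,0;0,0] *
       (Ry (Real.pi/2) * Rz 0)ᴴ *
       !![Complex.exp (Complex.I*τ),0;0,1] *
       (Rz 0 * Ry (-(Real.pi/2)) * Rz φ0)ᴴ)) = (Real.cos (τ + φ0) : ℂ) := by
  have hr4 : ((Real.sqrt 2/2 : ℝ) : ℂ)^4 = 1/4 := by
    have h : (Real.sqrt 2/2)^4 = 1/4 := by
      have h2 : Real.sqrt 2 ^ 2 = 2 := Real.sq_sqrt (by norm_num)
      nlinarith [h2]
    rw [show ((Real.sqrt 2/2 : ℝ) : ℂ)^4 = (((Real.sqrt 2/2)^4 : ℝ) : ℂ) by push_cast; ring, h]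
    norm_num
  have hconj2 : (starRingEnd ℂ) 2 = 2 := by simp [Complex.ext_iff]
  have hc1 : star (Complex.exp (-(Complex.I*τ))) = Complex.exp (Complex.I*(τ:ℂ)) := by
    rw [Complex.star_def, ← Complex.exp_conj]; congr 1
    rw [map_neg, map_mul, Complex.conj_I, Complex.conj_ofReal]; ring
  have hc4 : star (Complex.exp (Complex.I*(τ:ℂ))) = (Complex.exp (Complex.I*(τ:ℂ)))⁻¹ := by
    rw [Complex.star_def, ← Complex.exp_conj, ← Complex.exp_neg]; congr 1
    rw [map_mul, Complex.conj_I, Complex.conj_ofReal]; ring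
  have hc2 : star (Complex.exp (-(Complex.I*(φ0:ℂ)/2))) = Complex.exp (Complex.I*(φ0:ℂ)/2) := by
    rw [Complex.star_def, ← Complex.exp_conj]; congr 1
    rw [map_neg, map_div₀, map_mul, Complex.conj_I, Complex.conj_ofReal, hconj2]; ring
  have hc3 : star (Complex.exp (Complex.I*(φ0:ℂ)/2)) = (Complex.exp (Complex.I*(φ0:ℂ)/2))⁻¹ := by
    rw [Complex.star_def, ← Complex.exp_conj, ← Complex.exp_neg]; congr 1
    rw [map_div₀, map_mul, Complex.conj_I, Complex.conj_ofReal, hconj2]; ring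
  have ha' : Complex.exp (-(Complex.I*(τ:ℂ))) = (Complex.exp (Complex.I*(τ:ℂ)))⁻¹ := by
    rw [← Complex.exp_neg]
  have hb' : Complex.exp (-(Complex.I*(φ0:ℂ)/2)) = (Complex.exp (Complex.I*(φ0:ℂ)/2))⁻¹ := by
    rw [← Complex.exp_neg]
  have h1 : Complex.exp ((↑(τ+φ0):ℂ)*Complex.I) =
      Complex.exp (Complex.I*(τ:ℂ)) * Complex.exp (Complex.I*(φ0:ℂ)/2) *
        Complex.exp (Complex.I*(φ0:ℂ)/2) := by
    rw [← Complex.exp_add, ← Complex.exp_add]; congr 1; push_cast; ring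
  have h2 : Complex.exp (-(↑(τ+φ0):ℂ)*Complex.I) =
      (Complex.exp (Complex.I*(τ:ℂ)) * Complex.exp (Complex.I*(φ0:ℂ)/2) *
        Complex.exp (Complex.I*(φ0:ℂ)/2))⁻¹ := by
    rw [← h1, ← Complex.exp_neg]; congr 1; ring
  have hcos : (Real.cos (τ + φ0) : ℂ) =
      (Complex.exp (Complex.I*(τ:ℂ)) * Complex.exp (Complex.I*(φ0:ℂ)/2) *
        Complex.exp (Complex.I*(φ0:ℂ)/2) +
       (Complex.exp (Complex.I*(τ:ℂ)) * Complex.exp (Complex.I*(φ0:ℂ)/2) *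
        Complex.exp (Complex.I*(φ0:ℂ)/2))⁻¹)/2 := by
    rw [Complex.ofReal_cos, Complex.cos, h1, h2]
  have hane : Complex.exp (Complex.I*(τ:ℂ)) ≠ 0 := Complex.exp_ne_zero _
  have hbne : Complex.exp (Complex.I*(φ0:ℂ)/2) ≠ 0 := Complex.exp_ne_zero _
  rw [Rz_zero, Ry_pos, Ry_neg]
  simp only [Rz, one_mul, mul_one, Matrix.smul_mul, Matrix.mul_smul,
    Matrix.conjTranspose_smul, Complex.star_def, Complex.conj_ofReal, ct_fin_two,
    Matrix.mul_fin_two, Matrix.trace_smul, smul_smul, smul_eq_mul, Matrix.trace_fin_two_of,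
    ← Complex.star_def, hc1, hc2, hc3, hc4, ha', hb', hcos]
  simp only [star_add, star_zero, star_one, star_neg, star_inv₀, hc1, hc2, hc3, hc4, hb',
    mul_zero, zero_mul, add_zero, zero_add, mul_one, one_mul, neg_mul, mul_neg, neg_neg,
    Complex.star_def, Complex.conj_ofReal]
  rw [show ((Real.sqrt 2/2:ℝ):ℂ) * (((Real.sqrt 2/2:ℝ):ℂ) * (((Real.sqrt 2/2:ℝ):ℂ) *
      ((Real.sqrt 2/2:ℝ):ℂ))) = 1/4 from by rw [← hr4]; ring]
  have hbne2 : Complex.exp (Complex.I * (φ0:ℂ) * (1/2)) ≠ 0 := Complex.exp_ne_zero _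
  have hane2 : Complex.exp (Complex.I * (τ:ℂ)) ≠ 0 := Complex.exp_ne_zero _
  field_simp
  ring

variable {n : Type*} [Fintype n] [DecidableEq n]

lemma kron_ct (A : Matrix (Fin 2) (Fin 2) ℂ) (B : Matrix n n ℂ) :
    (A ⊗ₖ B)ᴴ = Aᴴ ⊗ₖ Bᴴ := by
  ext ⟨i,k⟩ ⟨j,l⟩
  simp [Matrix.conjTranspose_apply, Matrix.kroneckerMap_apply, star_mul']

lemma E00_ct : (!![1,0;0,0] : Matrix (Fin 2) (Fin 2) ℂ)ᴴ = !![1,0;0,0] := by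
  ext i j; fin_cases i <;> fin_cases j <;> simp

lemma E11_ct : (!![0,0;0,1] : Matrix (Fin 2) (Fin 2) ℂ)ᴴ = !![0,0;0,1] := by
  ext i j; fin_cases i <;> fin_cases j <;> simp

lemma blockDiag2_ct (U : Matrix n n ℂ) : (blockDiag2 Uᴴ 1)ᴴ = blockDiag2 U 1 := by
  unfold blockDiag2
  rw [Matrix.conjTranspose_add, kron_ct, kron_ct, Matrix.conjTranspose_conjTranspose,
    Matrix.conjTranspose_one, E00_ct, E11_ct]

lemma blockL (U P : Matrix n n ℂ) (e : ℂ) (h : Uᴴ * P = e • P)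
    (F : Matrix (Fin 2) (Fin 2) ℂ) :
    blockDiag2 Uᴴ 1 * (F ⊗ₖ P) = (!![e,0;0,1] * F) ⊗ₖ P := by
  unfold blockDiag2
  rw [Matrix.add_mul, ← Matrix.mul_kronecker_mul, ← Matrix.mul_kronecker_mul, h, one_mul,
    Matrix.kronecker_smul, ← Matrix.smul_kronecker, ← smul_mul_assoc,
    ← Matrix.add_kronecker, ← Matrix.add_mul]
  rw [show (e • !![1,0;0,0] + !![0,0;0,1] : Matrix (Fin 2) (Fin 2) ℂ) = !![e,0;0,1] from by
    ext i j; fin_cases i <;> fin_cases j <;> simp]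

lemma blockR (U P : Matrix n n ℂ) (f : ℂ) (h : P * U = f • P)
    (F : Matrix (Fin 2) (Fin 2) ℂ) :
    (F ⊗ₖ P) * blockDiag2 U 1 = (F * !![f,0;0,1]) ⊗ₖ P := by
  unfold blockDiag2
  rw [Matrix.mul_add, ← Matrix.mul_kronecker_mul, ← Matrix.mul_kronecker_mul, h, mul_one,
    Matrix.kronecker_smul, ← Matrix.smul_kronecker, ← mul_smul_comm,
    ← Matrix.add_kronecker, ← Matrix.mul_add]
  rw [show (f • !![1,0;0,0] + !![0,0;0,1] : Matrix (Fin 2) (Fin 2) ℂ) = !![f,0;0,1] from by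
    ext i j; fin_cases i <;> fin_cases j <;> simp]

lemma sandwich (U P : Matrix n n ℂ) (e f : ℂ)
    (h1 : Uᴴ * P = e • P) (h2 : P * U = f • P)
    (A C : Matrix (Fin 2) (Fin 2) ℂ) :
    (A ⊗ₖ (1 : Matrix n n ℂ)) * blockDiag2 Uᴴ 1 * (C ⊗ₖ (1 : Matrix n n ℂ)) *
      ((!![1,0;0,0] : Matrix (Fin 2) (Fin 2) ℂ) ⊗ₖ P) *
      ((A ⊗ₖ (1 : Matrix n n ℂ)) * blockDiag2 Uᴴ 1 * (C ⊗ₖ (1 : Matrix n n ℂ)))ᴴ =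
    (A * !![e,0;0,1] * C * !![1,0;0,0] * Cᴴ * !![f,0;0,1] * Aᴴ) ⊗ₖ P := by
  rw [Matrix.conjTranspose_mul, Matrix.conjTranspose_mul, blockDiag2_ct, kron_ct, kron_ct,
    Matrix.conjTranspose_one]
  rw [show (A ⊗ₖ (1 : Matrix n n ℂ)) * blockDiag2 Uᴴ 1 * (C ⊗ₖ (1 : Matrix n n ℂ)) *
      ((!![1,0;0,0] : Matrix (Fin 2) (Fin 2) ℂ) ⊗ₖ P) *
      ((Cᴴ ⊗ₖ (1 : Matrix n n ℂ)) * (blockDiag2 U 1 * (Aᴴ ⊗ₖ (1 : Matrix n n ℂ)))) =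
      (A ⊗ₖ (1 : Matrix n n ℂ)) * (blockDiag2 Uᴴ 1 * ((C ⊗ₖ (1 : Matrix n n ℂ)) *
      ((!![1,0;0,0] : Matrix (Fin 2) (Fin 2) ℂ) ⊗ₖ P))) *
      (Cᴴ ⊗ₖ (1 : Matrix n n ℂ)) * blockDiag2 U 1 * (Aᴴ ⊗ₖ (1 : Matrix n n ℂ)) from by
    simp only [Matrix.mul_assoc]]
  rw [← Matrix.mul_kronecker_mul C !![1,0;0,0] (1 : Matrix n n ℂ) P, one_mul,
    blockL U P e h1, ← Matrix.mul_kronecker_mul A _ (1 : Matrix n n ℂ) P, one_mul,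
    ← Matrix.mul_kronecker_mul _ Cᴴ P (1 : Matrix n n ℂ), mul_one,
    blockR U P f h2, ← Matrix.mul_kronecker_mul _ Aᴴ P (1 : Matrix n n ℂ), mul_one]
  congr 1
  simp only [Matrix.mul_assoc]

end QppAux

/-- QPP generalizes the Hadamard test. A single-layer QPP circuit can realize
both `cos τ = Re⟨χ, Uχ⟩` and `sin τ = Im⟨χ, Uχ⟩` as the `Z`-expectation of the ancilla. -/
theorem stmt_8 (N : ℕ) (U : Matrix (Fin N) (Fin N) ℂ)
    (hU : U ∈ Matrix.unitaryGroup (Fin N) ℂ)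
    (χ : Fin N → ℂ) (hχ : ∑ i, ‖χ i‖ ^ 2 = 1) (τ : ℝ)
    (heig : U.mulVec χ = Complex.exp (Complex.I * τ) • χ) :
    (∃ (ω : ℝ) (θ φ : ℕ → ℝ),
      Matrix.trace
        (((!![1, 0; 0, -1] : Matrix (Fin 2) (Fin 2) ℂ) ⊗ₖ (1 : Matrix (Fin N) (Fin N) ℂ)) *
          (qpp U 1 ω θ φ *
            ((!![1, 0; 0, 0] : Matrix (Fin 2) (Fin 2) ℂ) ⊗ₖ Matrix.vecMulVec χ (star χ)) *
            (qpp U 1 ω θ φ)ᴴ)) = (Real.cos τ : ℂ) ∧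
      (Real.cos τ : ℂ) = ((star χ ⬝ᵥ U.mulVec χ).re : ℂ)) ∧
    (∃ (ω' : ℝ) (θ' φ' : ℕ → ℝ),
      Matrix.trace
        (((!![1, 0; 0, -1] : Matrix (Fin 2) (Fin 2) ℂ) ⊗ₖ (1 : Matrix (Fin N) (Fin N) ℂ)) *
          (qpp U 1 ω' θ' φ' *
            ((!![1, 0; 0, 0] : Matrix (Fin 2) (Fin 2) ℂ) ⊗ₖ Matrix.vecMulVec χ (star χ)) *
            (qpp U 1 ω' θ' φ')ᴴ)) = (Real.sin τ : ℂ) ∧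
      (Real.sin τ : ℂ) = ((star χ ⬝ᵥ U.mulVec χ).im : ℂ)) := by
  classical
  obtain ⟨hU1, hU2⟩ := hU
  rw [Matrix.star_eq_conjTranspose] at hU1
  set P := Matrix.vecMulVec χ (star χ) with hP
  -- eigenvector fact for U†
  have hUv : Uᴴ.mulVec χ = Complex.exp (-(Complex.I*τ)) • χ := by
    have h0 : Complex.exp (Complex.I*τ) • Uᴴ.mulVec χ = χ := by
      have h := congrArg (fun M => Matrix.mulVec M χ) hU1
      simp only [← Matrix.mulVec_mulVec, Matrix.one_mulVec] at h
      conv_rhs => rw [← h, heig, Matrix.mulVec_smul]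
    calc Uᴴ.mulVec χ
        = (Complex.exp (-(Complex.I*τ)) * Complex.exp (Complex.I*τ)) • Uᴴ.mulVec χ := by
          rw [← Complex.exp_add]; simp
      _ = Complex.exp (-(Complex.I*τ)) • (Complex.exp (Complex.I*τ) • Uᴴ.mulVec χ) := by
          rw [mul_smul]
      _ = Complex.exp (-(Complex.I*τ)) • χ := by rw [h0]
  have hstar : star (Complex.exp (-(Complex.I*(τ:ℂ)))) = Complex.exp (Complex.I*(τ:ℂ)) := by
    rw [Complex.star_def, ← Complex.exp_conj]; congr 1
    rw [map_neg, map_mul, Complex.conj_I, Complex.conj_ofReal]; ring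
  have hUP : Uᴴ * P = Complex.exp (-(Complex.I*τ)) • P := by
    ext i j
    have hvi := congrFun hUv i
    simp only [Matrix.mulVec, dotProduct, Pi.smul_apply, smul_eq_mul] at hvi
    simp only [Matrix.mul_apply, Matrix.vecMulVec_apply, Matrix.smul_apply, smul_eq_mul,
      Pi.star_apply, hP]
    calc ∑ k, Uᴴ i k * (χ k * star (χ j))
        = (∑ k, Uᴴ i k * χ k) * star (χ j) := by
          rw [Finset.sum_mul]; exact Finset.sum_congr rfl fun k _ => by ring
      _ = Complex.exp (-(Complex.I*τ)) * (χ i * star (χ j)) := by rw [hvi]; ring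
  have hPU : P * U = Complex.exp (Complex.I*τ) • P := by
    ext i j
    have hvj := congrFun hUv j
    simp only [Matrix.mulVec, dotProduct, Pi.smul_apply, smul_eq_mul,
      Matrix.conjTranspose_apply] at hvj
    have h2 := congrArg star hvj
    simp only [star_sum, star_mul', star_star, hstar] at h2
    simp only [Matrix.mul_apply, Matrix.vecMulVec_apply, Matrix.smul_apply, smul_eq_mul,
      Pi.star_apply, hP]
    calc ∑ k, χ i * star (χ k) * U k j
        = χ i * ∑ k, U k j * star (χ k) := by
          rw [Finset.mul_sum]; exact Finset.sum_congr rfl fun k _ => by ring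
      _ = Complex.exp (Complex.I*τ) * (χ i * star (χ j)) := by rw [h2]; ring
  have hnorm : ∑ i, star (χ i) * χ i = (1:ℂ) := by
    have h1 : ∀ i, star (χ i) * χ i = ((‖χ i‖^2 : ℝ) : ℂ) := fun i => by
      rw [mul_comm, Complex.star_def, Complex.mul_conj, Complex.normSq_eq_norm_sq]
    rw [Finset.sum_congr rfl fun i _ => h1 i, ← Complex.ofReal_sum, hχ, Complex.ofReal_one]
  have htr : Matrix.trace P = 1 := by
    rw [hP, Matrix.trace]
    simp only [Matrix.diag_apply, Matrix.vecMulVec_apply, Pi.star_apply]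
    rw [← hnorm]
    exact Finset.sum_congr rfl fun i _ => by ring
  have hdot : star χ ⬝ᵥ U.mulVec χ = Complex.exp (Complex.I*τ) := by
    rw [heig, dotProduct_smul, smul_eq_mul,
      show star χ ⬝ᵥ χ = (1:ℂ) from hnorm, mul_one]
  have hre : ((star χ ⬝ᵥ U.mulVec χ).re : ℂ) = (Real.cos τ : ℂ) := by
    rw [hdot, show Complex.I*(τ:ℂ) = (τ:ℂ)*Complex.I by ring, Complex.exp_ofReal_mul_I_re]
  have him : ((star χ ⬝ᵥ U.mulVec χ).im : ℂ) = (Real.sin τ : ℂ) := by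
    rw [hdot, show Complex.I*(τ:ℂ) = (τ:ℂ)*Complex.I by ring, Complex.exp_ofReal_mul_I_im]
  -- the generic trace computation for a given φ0
  have key : ∀ φ0 : ℝ,
      Matrix.trace
        (((!![1, 0; 0, -1] : Matrix (Fin 2) (Fin 2) ℂ) ⊗ₖ (1 : Matrix (Fin N) (Fin N) ℂ)) *
          (qpp U 1 0 (fun n => if n = 0 then -(Real.pi/2) else Real.pi/2)
              (fun n => if n = 0 then φ0 else 0) *
            ((!![1, 0; 0, 0] : Matrix (Fin 2) (Fin 2) ℂ) ⊗ₖ P) *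
            (qpp U 1 0 (fun n => if n = 0 then -(Real.pi/2) else Real.pi/2)
              (fun n => if n = 0 then φ0 else 0))ᴴ)) = (Real.cos (τ + φ0) : ℂ) := by
    intro φ0
    have hqpp : qpp U 1 0 (fun n => if n = 0 then -(Real.pi/2) else Real.pi/2)
        (fun n => if n = 0 then φ0 else 0) =
        ((Rz 0 * Ry (-(Real.pi/2)) * Rz φ0) ⊗ₖ (1 : Matrix (Fin N) (Fin N) ℂ)) *
          blockDiag2 Uᴴ 1 *
          ((Ry (Real.pi/2) * Rz 0) ⊗ₖ (1 : Matrix (Fin N) (Fin N) ℂ)) := by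
      simp [qpp, qppEven]
    rw [hqpp, QppAux.sandwich U P (Complex.exp (-(Complex.I*τ))) (Complex.exp (Complex.I*τ))
      hUP hPU (Rz 0 * Ry (-(Real.pi/2)) * Rz φ0) (Ry (Real.pi/2) * Rz 0),
      ← Matrix.mul_kronecker_mul, one_mul, Matrix.trace_kronecker, htr, mul_one]
    exact QppAux.two_calc τ φ0
  refine ⟨⟨0, (fun n => if n = 0 then -(Real.pi/2) else Real.pi/2),
      (fun n => if n = 0 then (0:ℝ) else 0), ?_, hre.symm⟩,
    ⟨0, (fun n => if n = 0 then -(Real.pi/2) else Real.pi/2),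
      (fun n => if n = 0 then -(Real.pi/2) else 0), ?_, him.symm⟩⟩
  · rw [key 0, add_zero]
  · rw [key (-(Real.pi/2)), show τ + -(Real.pi/2) = τ - Real.pi/2 by ring,
      Real.cos_sub_pi_div_two]
end

section
/- Let γ ∈ (0,1) and ε > 0, and let ρ be a d×d density matrix all of whose nonzero eigenvalues lie in the interval [γ, 1]. Let P : ℝ → ℝ be a polynomial such that |P(x) − (−ln x)/(2 ln(1/γ))| ≤ ε/(4 ln(1/γ)) for all x ∈ [γ, 1], and let E ∈ ℝ satisfy |E − tr(ρ · P(ρ))| ≤ ε/(4 ln(1/γ)). Then |2 ln(1/γ) · E − S(ρ)| ≤ ε. -/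
open scoped ComplexOrder

/-- error propagation in QPP-based von Neumann entropy estimation.
If `P` approximates `(-ln x)/(2 ln(1/γ))` on `[γ,1]` within `ε/(4 ln(1/γ))` and `E`
approximates `tr(ρ·P(ρ)) = Σ_j p_j P(p_j)` within `ε/(4 ln(1/γ))`, then
`2 ln(1/γ)·E` approximates `S(ρ)` within `ε`. -/
theorem stmt_12 (d : ℕ) (γ ε E : ℝ)
    (hγ : γ ∈ Set.Ioo (0 : ℝ) 1) (hε : 0 < ε)
    (ρ : Matrix (Fin d) (Fin d) ℂ) (hρ : ρ.PosSemidef) (htr : ρ.trace = 1)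
    (heigbound : ∀ j, hρ.1.eigenvalues j ≠ 0 → hρ.1.eigenvalues j ∈ Set.Icc γ 1)
    (P : Polynomial ℝ)
    (hP : ∀ x ∈ Set.Icc γ 1,
      |P.eval x - (-Real.log x) / (2 * Real.log (1 / γ))| ≤ ε / (4 * Real.log (1 / γ)))
    (hE : |E - ∑ j, hρ.1.eigenvalues j * P.eval (hρ.1.eigenvalues j)|
        ≤ ε / (4 * Real.log (1 / γ))) :
    |2 * Real.log (1 / γ) * E -
        (-∑ j ∈ Finset.univ.filter (fun j => 0 < hρ.1.eigenvalues j),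
            hρ.1.eigenvalues j * Real.log (hρ.1.eigenvalues j))| ≤ ε := by
  obtain ⟨hγ0, hγ1⟩ := hγ
  set p := hρ.1.eigenvalues with hpdef
  have hl : 0 < Real.log (1 / γ) := Real.log_pos (by rw [lt_div_iff₀ hγ0]; linarith)
  have hpnn : ∀ j, 0 ≤ p j := hρ.eigenvalues_nonneg
  have hsum : ∑ j, p j = 1 := by
    have h := congrArg Matrix.trace hρ.1.spectral_theorem
    have hU : star (hρ.1.eigenvectorUnitary : Matrix (Fin d) (Fin d) ℂ) *
        (hρ.1.eigenvectorUnitary : Matrix (Fin d) (Fin d) ℂ) = 1 :=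
      Matrix.mem_unitaryGroup_iff'.mp hρ.1.eigenvectorUnitary.2
    rw [htr, Unitary.conjStarAlgAut_apply, Matrix.trace_mul_cycle, hU, one_mul,
      Matrix.trace_diagonal] at h
    have h' : (1 : ℂ) = ∑ j, ((p j : ℂ)) := h
    exact_mod_cast h'.symm
  set s := Finset.univ.filter (fun j => 0 < p j) with hsdef
  have hT : ∑ j, p j * P.eval (p j) = ∑ j ∈ s, p j * P.eval (p j) := by
    rw [hsdef, Finset.sum_filter]
    refine Finset.sum_congr rfl fun j _ => ?_
    rcases eq_or_lt_of_le (hpnn j) with h | h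
    · simp [← h]
    · simp [h]
  have hssum : ∑ j ∈ s, p j ≤ 1 := by
    rw [← hsum]
    exact Finset.sum_le_sum_of_subset_of_nonneg (Finset.filter_subset _ _)
      (fun j _ _ => hpnn j)
  set T := ∑ j ∈ s, p j * P.eval (p j) with hTdef
  set S := -∑ j ∈ s, p j * Real.log (p j) with hSdef
  have key : |2 * Real.log (1 / γ) * T - S| ≤ ε / 2 := by
    have heq : 2 * Real.log (1 / γ) * T - S
        = ∑ j ∈ s, p j * (2 * Real.log (1 / γ) * P.eval (p j) + Real.log (p j)) := by
      rw [hSdef, hTdef, sub_neg_eq_add, Finset.mul_sum, ← Finset.sum_add_distrib]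
      exact Finset.sum_congr rfl fun j _ => by ring
    rw [heq]
    calc |∑ j ∈ s, p j * (2 * Real.log (1 / γ) * P.eval (p j) + Real.log (p j))|
        ≤ ∑ j ∈ s, |p j * (2 * Real.log (1 / γ) * P.eval (p j) + Real.log (p j))| :=
          Finset.abs_sum_le_sum_abs _ _
      _ ≤ ∑ j ∈ s, p j * (ε / 2) := by
          refine Finset.sum_le_sum fun j hj => ?_
          have hjpos : 0 < p j := (Finset.mem_filter.mp hj).2
          have hmem : p j ∈ Set.Icc γ 1 := heigbound j (ne_of_gt hjpos)
          have hPb := hP (p j) hmem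
          have hx : 2 * Real.log (1 / γ) * P.eval (p j) + Real.log (p j)
              = 2 * Real.log (1 / γ) *
                (P.eval (p j) - (-Real.log (p j)) / (2 * Real.log (1 / γ))) := by
            field_simp
            ring
          have habs : |2 * Real.log (1 / γ) * P.eval (p j) + Real.log (p j)|
              = 2 * Real.log (1 / γ) *
                |P.eval (p j) - (-Real.log (p j)) / (2 * Real.log (1 / γ))| := by
            rw [hx, abs_mul, abs_of_pos (show (0:ℝ) < 2 * Real.log (1 / γ) by linarith)]
          rw [abs_mul, abs_of_pos hjpos, habs]
          have hb : 2 * Real.log (1 / γ) *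
              |P.eval (p j) - (-Real.log (p j)) / (2 * Real.log (1 / γ))|
              ≤ 2 * Real.log (1 / γ) * (ε / (4 * Real.log (1 / γ))) :=
            mul_le_mul_of_nonneg_left hPb (by linarith)
          have h2 : 2 * Real.log (1 / γ) * (ε / (4 * Real.log (1 / γ))) = ε / 2 := by
            field_simp; ring
          nlinarith [hpnn j]
      _ = (∑ j ∈ s, p j) * (ε / 2) := by rw [← Finset.sum_mul]
      _ ≤ ε / 2 := by nlinarith
  have hET : |E - T| ≤ ε / (4 * Real.log (1 / γ)) := by rw [← hT]; exact hE
  have hE' : |2 * Real.log (1 / γ) * E - 2 * Real.log (1 / γ) * T| ≤ ε / 2 := by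
    rw [← mul_sub, abs_mul, abs_of_pos (show (0:ℝ) < 2 * Real.log (1 / γ) by linarith)]
    have h2 : 2 * Real.log (1 / γ) * (ε / (4 * Real.log (1 / γ))) = ε / 2 := by
      field_simp; ring
    calc 2 * Real.log (1 / γ) * |E - T|
        ≤ 2 * Real.log (1 / γ) * (ε / (4 * Real.log (1 / γ))) :=
          mul_le_mul_of_nonneg_left hET (by linarith)
      _ = ε / 2 := h2
  calc |2 * Real.log (1 / γ) * E - S|
      ≤ |2 * Real.log (1 / γ) * E - 2 * Real.log (1 / γ) * T|
        + |2 * Real.log (1 / γ) * T - S| := abs_sub_le _ _ _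
    _ ≤ ε / 2 + ε / 2 := add_le_add hE' key
    _ = ε := by ring
end

section
/- Let α ∈ (0,1), γ ∈ (0,1) and ε' > 0, and let ρ be a density matrix all of whose nonzero eigenvalues lie in [γ, 1]. Let P : ℝ → ℝ be a polynomial such that |P(x) − (γ^{1−α}/2)·x^{α−1}| ≤ (γ^{1−α}/4)·ε' for all x ∈ [γ, 1], and let E ∈ ℝ satisfy |E − tr(ρ · P(ρ))| ≤ (γ^{1−α}/4)·ε'. Then |2 γ^{α−1} E − tr(ρ^α)| ≤ ε'. -/
open scoped ComplexOrder

/-- error propagation in QPP-based Rényi entropy estimation for `α ∈ (0,1)`.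
If `P` approximates `(γ^{1−α}/2)·x^{α−1}` on `[γ,1]` within `(γ^{1−α}/4)·ε'` and `E`
approximates `tr(ρ·P(ρ)) = Σ_j p_j P(p_j)` within `(γ^{1−α}/4)·ε'`, then
`2γ^{α−1}·E` approximates `tr(ρ^α) = Σ_j p_j^α` within `ε'`. -/
theorem stmt_14 (d : ℕ) (α γ ε' E : ℝ)
    (hα : α ∈ Set.Ioo (0 : ℝ) 1) (hγ : γ ∈ Set.Ioo (0 : ℝ) 1) (hε : 0 < ε')
    (ρ : Matrix (Fin d) (Fin d) ℂ) (hρ : ρ.PosSemidef) (htr : ρ.trace = 1)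
    (heigbound : ∀ j, hρ.1.eigenvalues j ≠ 0 → hρ.1.eigenvalues j ∈ Set.Icc γ 1)
    (P : Polynomial ℝ)
    (hP : ∀ x ∈ Set.Icc γ 1,
      |P.eval x - γ ^ (1 - α) / 2 * x ^ (α - 1)| ≤ γ ^ (1 - α) / 4 * ε')
    (hE : |E - ∑ j, hρ.1.eigenvalues j * P.eval (hρ.1.eigenvalues j)|
        ≤ γ ^ (1 - α) / 4 * ε') :
    |2 * γ ^ (α - 1) * E - ∑ j, hρ.1.eigenvalues j ^ α| ≤ ε' := by
  obtain ⟨hα0, hα1⟩ := hα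
  obtain ⟨hγ0, hγ1⟩ := hγ
  set p : Fin d → ℝ := hρ.1.eigenvalues with hp
  have hpnn : ∀ j, 0 ≤ p j := fun j => hρ.eigenvalues_nonneg j
  -- sum of eigenvalues is 1
  have hsum : ∑ j, p j = 1 := by
    have h1 : ρ.trace = ∑ j, (p j : ℂ) := by
      conv_lhs => rw [hρ.1.spectral_theorem, Unitary.conjStarAlgAut_apply]
      rw [Matrix.trace_mul_cycle]
      have : (star (hρ.1.eigenvectorUnitary : Matrix (Fin d) (Fin d) ℂ)) *
          (hρ.1.eigenvectorUnitary : Matrix (Fin d) (Fin d) ℂ) = 1 := by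
        simp [hρ.1.eigenvectorUnitary.2.1]
      rw [this, Matrix.one_mul, Matrix.trace_diagonal]
      rfl
    have := htr.symm.trans h1
    have h2 : ((1 : ℝ) : ℂ) = ((∑ j, p j : ℝ) : ℂ) := by
      push_cast; simpa using this
    exact_mod_cast h2.symm
  have hγpow : (0 : ℝ) < γ ^ (1 - α) := Real.rpow_pos_of_pos hγ0 _
  have hγpow' : (0 : ℝ) < γ ^ (α - 1) := Real.rpow_pos_of_pos hγ0 _
  have hγmul : γ ^ (α - 1) * γ ^ (1 - α) = 1 := by
    rw [← Real.rpow_add hγ0]; norm_num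
  set K : ℝ := γ ^ (1 - α) / 4 * ε' with hK
  -- termwise bound
  have hterm : ∀ j, |p j * P.eval (p j) - γ ^ (1 - α) / 2 * p j ^ α| ≤ p j * K := by
    intro j
    by_cases h0 : p j = 0
    · rw [h0, Real.zero_rpow hα0.ne']
      simp
    · have hmem := heigbound j h0
      have hpj : 0 < p j := lt_of_lt_of_le hγ0 hmem.1
      have hpow : p j ^ α = p j * p j ^ (α - 1) := by
        rw [← Real.rpow_one_add' (hpnn j) (by intro h; apply hα0.ne'; linarith)]
        ring_nf
      calc |p j * P.eval (p j) - γ ^ (1 - α) / 2 * p j ^ α|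
          = |p j| * |P.eval (p j) - γ ^ (1 - α) / 2 * p j ^ (α - 1)| := by
            rw [← abs_mul]; rw [hpow]; ring_nf
        _ ≤ p j * K := by
            rw [abs_of_pos hpj]
            exact mul_le_mul_of_nonneg_left (hP _ hmem) hpj.le
  have hsumbound : |(∑ j, p j * P.eval (p j)) - γ ^ (1 - α) / 2 * ∑ j, p j ^ α| ≤ K := by
    rw [Finset.mul_sum, ← Finset.sum_sub_distrib]
    calc |∑ j, (p j * P.eval (p j) - γ ^ (1 - α) / 2 * p j ^ α)|
        ≤ ∑ j, |p j * P.eval (p j) - γ ^ (1 - α) / 2 * p j ^ α| :=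
          Finset.abs_sum_le_sum_abs _ _
      _ ≤ ∑ j, p j * K := Finset.sum_le_sum fun j _ => hterm j
      _ = K := by rw [← Finset.sum_mul, hsum, one_mul]
  -- combine
  have key : 2 * γ ^ (α - 1) * E - ∑ j, p j ^ α
      = 2 * γ ^ (α - 1) * (E - ∑ j, p j * P.eval (p j))
        + 2 * γ ^ (α - 1) * ((∑ j, p j * P.eval (p j)) - γ ^ (1 - α) / 2 * ∑ j, p j ^ α) := by
    have : 2 * γ ^ (α - 1) * (γ ^ (1 - α) / 2 * ∑ j, p j ^ α) = ∑ j, p j ^ α := by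
      rw [show 2 * γ ^ (α - 1) * (γ ^ (1 - α) / 2 * ∑ j, p j ^ α)
        = (γ ^ (α - 1) * γ ^ (1 - α)) * ∑ j, p j ^ α by ring, hγmul, one_mul]
    linarith [this]
  calc |2 * γ ^ (α - 1) * E - ∑ j, p j ^ α|
      ≤ |2 * γ ^ (α - 1) * (E - ∑ j, p j * P.eval (p j))|
        + |2 * γ ^ (α - 1) * ((∑ j, p j * P.eval (p j)) - γ ^ (1 - α) / 2 * ∑ j, p j ^ α)| := by
        rw [key]; exact abs_add_le _ _
    _ ≤ 2 * γ ^ (α - 1) * K + 2 * γ ^ (α - 1) * K := by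
        have h2 : |2 * γ ^ (α - 1)| = 2 * γ ^ (α - 1) := abs_of_pos (by positivity)
        rw [abs_mul (2 * γ ^ (α - 1)), abs_mul (2 * γ ^ (α - 1)), h2]
        exact add_le_add (mul_le_mul_of_nonneg_left hE (by positivity))
          (mul_le_mul_of_nonneg_left hsumbound (by positivity))
    _ = ε' := by
        have : 2 * γ ^ (α - 1) * K + 2 * γ ^ (α - 1) * K
            = (γ ^ (α - 1) * γ ^ (1 - α)) * ε' := by rw [hK]; ring
        rw [this, hγmul, one_mul]
end

section
/- For every β ∈ [0,1] and every γ ∈ (0,2], the series Σ_{l=0}^{∞} |C(β, l)| · (1 − γ/2)^l converges and satisfies Σ_{l=0}^{∞} |C(β, l)| · (1 − γ/2)^l ≤ 1 + β·ln(2/γ) ≤ ln(2e/γ). -/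
/-- The generalized binomial coefficient `C(β, l) = β(β−1)⋯(β−l+1)/l!`. -/
noncomputable def genBinom (β : ℝ) (l : ℕ) : ℝ :=
  (∏ i ∈ Finset.range l, (β - i)) / (Nat.factorial l)

lemma genBinom_abs_le (β : ℝ) (hβ0 : 0 ≤ β) (hβ1 : β ≤ 1) (l : ℕ) :
    |genBinom β (l + 1)| ≤ β / (l + 1) := by
  have h1 : |∏ i ∈ Finset.range (l + 1), (β - i)| ≤ β * Nat.factorial l := by
    rw [Finset.abs_prod, Finset.prod_range_succ']
    have h0 : |β - (0 : ℕ)| = β := by simp [abs_of_nonneg hβ0]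
    rw [h0]
    rw [mul_comm]
    apply mul_le_mul_of_nonneg_left _ hβ0
    calc ∏ i ∈ Finset.range l, |β - (↑(i + 1) : ℝ)|
        ≤ ∏ i ∈ Finset.range l, ((i : ℝ) + 1) := by
          apply Finset.prod_le_prod (fun i _ => abs_nonneg _)
          intro i _
          rw [abs_sub_comm, abs_of_nonneg (by push_cast; linarith [Nat.cast_nonneg (α := ℝ) i])]
          push_cast; linarith
      _ = Nat.factorial l := by
          induction l with
          | zero => simp
          | succ n ih => rw [Finset.prod_range_succ, ih, Nat.factorial_succ]; push_cast; ring
  have hfac : (0 : ℝ) < Nat.factorial (l + 1) := by positivity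
  rw [genBinom, abs_div, abs_of_pos hfac, div_le_div_iff₀ hfac (by positivity)]
  calc |∏ i ∈ Finset.range (l + 1), (β - i)| * (l + 1)
      ≤ (β * Nat.factorial l) * (l + 1) := by
        apply mul_le_mul_of_nonneg_right h1 (by positivity)
    _ = β * Nat.factorial (l + 1) := by rw [Nat.factorial_succ]; push_cast; ring

/-- for `β ∈ [0,1]` and `γ ∈ (0,2]`, the series
`Σ_l |C(β,l)|·(1−γ/2)^l` converges and is at most `1 + β·ln(2/γ) ≤ ln(2e/γ)`. -/
theorem stmt_15 (β γ : ℝ) (hβ : β ∈ Set.Icc (0 : ℝ) 1) (hγ : γ ∈ Set.Ioc (0 : ℝ) 2) :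
    Summable (fun l : ℕ => |genBinom β l| * (1 - γ / 2) ^ l) ∧
    (∑' l : ℕ, |genBinom β l| * (1 - γ / 2) ^ l) ≤ 1 + β * Real.log (2 / γ) ∧
    1 + β * Real.log (2 / γ) ≤ Real.log (2 * Real.exp 1 / γ) := by
  obtain ⟨hβ0, hβ1⟩ := hβ
  obtain ⟨hγ0, hγ2⟩ := hγ
  set x : ℝ := 1 - γ / 2 with hx
  have hx0 : 0 ≤ x := by simp [hx]; linarith
  have hx1 : x < 1 := by simp [hx]; linarith
  have hxabs : |x| < 1 := abs_lt.mpr ⟨by linarith, hx1⟩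
  have hlog : -Real.log (1 - x) = Real.log (2 / γ) := by
    have : (1 : ℝ) - x = γ / 2 := by simp [hx]
    rw [this, Real.log_div (ne_of_gt hγ0) two_ne_zero, Real.log_div two_ne_zero (ne_of_gt hγ0)]
    ring
  -- the majorant f
  set f : ℕ → ℝ := fun l => if l = 0 then 1 else β * x ^ l / l with hf
  have hsumlog := Real.hasSum_pow_div_log_of_abs_lt_one hxabs
  have hsum1 : HasSum (fun n : ℕ => f (n + 1)) (β * Real.log (2 / γ)) := by
    rw [← hlog]
    have := hsumlog.mul_left β
    convert this using 2 with n
    · rfl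
    simp [hf]
    push_cast
    ring
  have hsumf : HasSum f (1 + β * Real.log (2 / γ)) := by
    have := (hasSum_nat_add_iff (f := f) 1).mp hsum1
    simpa [hf, add_comm] using this
  have hle : ∀ l : ℕ, |genBinom β l| * x ^ l ≤ f l := by
    intro l
    cases l with
    | zero => simp [hf, genBinom]
    | succ n =>
      have h1 := genBinom_abs_le β hβ0 hβ1 n
      simp only [hf, if_neg (Nat.succ_ne_zero n)]
      have hxp : (0 : ℝ) ≤ x ^ (n + 1) := by positivity
      calc |genBinom β (n + 1)| * x ^ (n + 1)
          ≤ (β / (n + 1)) * x ^ (n + 1) := mul_le_mul_of_nonneg_right h1 hxp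
        _ = β * x ^ (n + 1) / (↑(n + 1)) := by push_cast; ring
  have hsummable : Summable (fun l : ℕ => |genBinom β l| * x ^ l) :=
    Summable.of_nonneg_of_le (fun l => by positivity) hle hsumf.summable
  refine ⟨hsummable, ?_, ?_⟩
  · calc (∑' l : ℕ, |genBinom β l| * x ^ l) ≤ ∑' l, f l :=
        Summable.tsum_le_tsum hle hsummable hsumf.summable
      _ = 1 + β * Real.log (2 / γ) := hsumf.tsum_eq
  · have hlog0 : 0 ≤ Real.log (2 / γ) := Real.log_nonneg (by rw [le_div_iff₀ hγ0]; linarith)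
    have : Real.log (2 * Real.exp 1 / γ) = 1 + Real.log (2 / γ) := by
      rw [mul_comm 2 (Real.exp 1), mul_div_assoc, Real.log_mul (Real.exp_ne_zero 1)
        (by positivity), Real.log_exp]
    rw [this]
    nlinarith
end
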